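/- If g : ℤ_{≥1} → ℝ satisfies g_[j−1](t) > 0 and the log-convexity inequality g_[j−1](t)·g_[j−1](t+2) ≥ g_[j−1](t+1)² for all t in an initial range, and g_[k](t) > 0 everywhere, then positivity of the consecutive minors g_[j](t) := det(H_g(t,j)) on [1, 2^{l+k−j}] for all 1 ≤ j ≤ k−1 propagates to positivity on [1, 2^{l+k−j+1}]; by induction, positivity of g_[j](t) for 1 ≤ t ≤ 2^{k−j} and all 1 ≤ j ≤ k−1, together with g_[k] > 0, implies g_[j](t) > 0 for all t ≥ 1 and 1 ≤ j ≤ k−1. -/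

import Mathlib

/-- The `j × j` Hankel matrix `H_g(t,j)` with `(a,b)` entry `g(t+a+b)` (0-based). -/
def hankelMat (g : ℕ → ℝ) (t j : ℕ) : Matrix (Fin j) (Fin j) ℝ :=
  Matrix.of fun a b => g (t + a + b)

open Matrix

/-- Reindexing equivalence putting the interior indices first and the two border
indices (`0` and `m+1`) last. -/
def eqvTwo (m : ℕ) : Fin m ⊕ Fin 2 ≃ Fin (m + 2) where
  toFun x := Sum.elim (fun i => (⟨i.1 + 1, by omega⟩ : Fin (m + 2)))
    (fun c => if c.1 = 0 then ⟨0, by omega⟩ else ⟨m + 1, by omega⟩) x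
  invFun x := if h1 : x.1 = 0 then Sum.inr 0 else if h2 : x.1 = m + 1 then Sum.inr 1
    else Sum.inl ⟨x.1 - 1, by have := x.2; omega⟩
  left_inv := by
    rintro (i | c)
    · have := i.2
      simp only [Sum.elim_inl]
      split_ifs <;> simp_all [Fin.ext_iff] <;> omega
    · fin_cases c <;> simp
  right_inv := by
    intro x
    have := x.2
    simp only []
    split_ifs with h1 h2 <;> apply Fin.ext <;> simp_all <;> omega

/-- Reindexing equivalence on `Fin (m+1)`: interior first, then `0`. -/
def eqvS (m : ℕ) : Fin m ⊕ Fin 1 ≃ Fin (m + 1) where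
  toFun x := Sum.elim (fun i => (⟨i.1 + 1, by omega⟩ : Fin (m + 1))) (fun _ => ⟨0, by omega⟩) x
  invFun x := if h1 : x.1 = 0 then Sum.inr 0
    else Sum.inl ⟨x.1 - 1, by have := x.2; omega⟩
  left_inv := by
    rintro (i | c)
    · have := i.2
      simp only [Sum.elim_inl]
      split_ifs <;> simp_all [Fin.ext_iff] <;> omega
    · fin_cases c <;> simp
  right_inv := by
    intro x
    have := x.2
    simp only []
    split_ifs with h1 <;> apply Fin.ext <;> simp [h1] <;> omega

/-- Reindexing equivalence on `Fin (m+1)`: interior first, then `m`. -/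
def eqvL (m : ℕ) : Fin m ⊕ Fin 1 ≃ Fin (m + 1) where
  toFun x := Sum.elim (fun i => (⟨i.1, by omega⟩ : Fin (m + 1))) (fun _ => ⟨m, by omega⟩) x
  invFun x := if h1 : x.1 = m then Sum.inr 0
    else Sum.inl ⟨x.1, by have := x.2; omega⟩
  left_inv := by
    rintro (i | c)
    · have := i.2
      simp only [Sum.elim_inl]
      split_ifs <;> simp_all [Fin.ext_iff] <;> omega
    · fin_cases c <;> simp
  right_inv := by
    intro x
    have := x.2
    simp only []
    split_ifs <;> simp_all [Fin.ext_iff] <;> omega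

lemma hankel_transpose (g : ℕ → ℝ) (t j : ℕ) : (hankelMat g t j)ᵀ = hankelMat g t j := by
  ext a b
  simp only [Matrix.transpose_apply, hankelMat, Matrix.of_apply]
  congr 1
  omega

/-- Desnanot–Jacobi / Dodgson condensation for Hankel matrices, in the weak form
we need: the product of the two "middle" minors exceeds the product of the big
and the interior determinant by a square. -/
lemma hankel_key (g : ℕ → ℝ) (s m : ℕ) (hB : (hankelMat g (s + 2) m).det ≠ 0) :
    ∃ x : ℝ, (hankelMat g s (m + 1)).det * (hankelMat g (s + 2) (m + 1)).det
      = (hankelMat g s (m + 2)).det * (hankelMat g (s + 2) m).det + x ^ 2 := by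
  set B : Matrix (Fin m) (Fin m) ℝ := hankelMat g (s + 2) m with hBdef
  letI : Invertible B := B.invertibleOfIsUnitDet (isUnit_iff_ne_zero.2 hB)
  set C : Matrix (Fin m) (Fin 2) ℝ :=
    Matrix.of (fun i c => if c.1 = 0 then g (s + 1 + i.1) else g (s + m + 2 + i.1)) with hCdef
  set D : Matrix (Fin 2) (Fin m) ℝ :=
    Matrix.of (fun c j => if c.1 = 0 then g (s + 1 + j.1) else g (s + m + 2 + j.1)) with hDdef
  set E : Matrix (Fin 2) (Fin 2) ℝ :=
    Matrix.of (fun r c => if r.1 = 0 then (if c.1 = 0 then g s else g (s + m + 1))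
      else (if c.1 = 0 then g (s + m + 1) else g (s + 2 * m + 2))) with hEdef
  set F : Matrix (Fin 2) (Fin 2) ℝ := E - D * ⅟B * C with hFdef
  -- symmetry of the Schur complement
  have hBT : Bᵀ = B := hankel_transpose g (s + 2) m
  have hCT : Cᵀ = D := by
    ext c i
    simp [Matrix.transpose_apply, hCdef, hDdef]
  have hDT : Dᵀ = C := by rw [← hCT, Matrix.transpose_transpose]
  have hUT : (⅟B)ᵀ = ⅟B := by
    have h1 : (⅟B)ᵀ * B = 1 := by
      calc (⅟B)ᵀ * B = (⅟B)ᵀ * Bᵀ := by rw [hBT]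
        _ = (B * ⅟B)ᵀ := (Matrix.transpose_mul _ _).symm
        _ = 1 := by rw [mul_invOf_self, Matrix.transpose_one]
    exact (invOf_eq_left_inv h1).symm
  have hET : Eᵀ = E := by
    ext r c
    fin_cases r <;> fin_cases c <;> simp [hEdef]
  have hFsym : F 0 1 = F 1 0 := by
    have h2 : Fᵀ = F := by
      rw [hFdef, Matrix.transpose_sub, hET, Matrix.transpose_mul, Matrix.transpose_mul, hUT,
        hCT, hDT, ← Matrix.mul_assoc]
    have h3 : Fᵀ 1 0 = F 1 0 := by rw [h2]
    simpa [Matrix.transpose_apply] using h3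
  -- determinant of a bordered minor via the Schur complement
  have hminor : ∀ (M : Matrix (Fin (m + 1)) (Fin (m + 1)) ℝ)
      (e : Fin m ⊕ Fin 1 ≃ Fin (m + 1)) (r c : Fin 2),
      M.submatrix e e = Matrix.fromBlocks B (Matrix.of fun i (_ : Fin 1) => C i c)
        (Matrix.of fun (_ : Fin 1) j => D r j) (Matrix.of fun _ _ => E r c) →
      M.det = B.det * F r c := by
    intro M e r c h
    rw [← Matrix.det_submatrix_equiv_self e M, h, Matrix.det_fromBlocks₁₁]
    congr 1
    rw [Matrix.det_fin_one]
    simp only [hFdef, Matrix.sub_apply, Matrix.mul_apply, Matrix.of_apply]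
  -- the big determinant via the Schur complement
  have hbig : (hankelMat g s (m + 2)).det = B.det * (F 0 0 * F 1 1 - F 0 1 * F 1 0) := by
    have h : (hankelMat g s (m + 2)).submatrix (eqvTwo m) (eqvTwo m)
        = Matrix.fromBlocks B C D E := by
      ext x y
      rcases x with i | u <;> rcases y with j | v
      · simp only [Matrix.submatrix_apply, Matrix.fromBlocks_apply₁₁, hankelMat, Matrix.of_apply,
          eqvTwo, Equiv.coe_fn_mk, Sum.elim_inl, hBdef]
        congr 1
        omega
      · fin_cases v <;>
          simp only [Matrix.submatrix_apply, Matrix.fromBlocks_apply₁₂, hankelMat,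
            Matrix.of_apply, eqvTwo, Equiv.coe_fn_mk, Sum.elim_inl, Sum.elim_inr, hCdef] <;>
          simp <;> congr 1 <;> omega
      · fin_cases u <;>
          simp only [Matrix.submatrix_apply, Matrix.fromBlocks_apply₂₁, hankelMat,
            Matrix.of_apply, eqvTwo, Equiv.coe_fn_mk, Sum.elim_inl, Sum.elim_inr, hDdef] <;>
          simp <;> congr 1 <;> omega
      · fin_cases u <;> fin_cases v <;>
          simp only [Matrix.submatrix_apply, Matrix.fromBlocks_apply₂₂, hankelMat,
            Matrix.of_apply, eqvTwo, Equiv.coe_fn_mk, Sum.elim_inr, hEdef] <;>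
          simp <;> congr 1 <;> omega
    rw [← Matrix.det_submatrix_equiv_self (eqvTwo m) (hankelMat g s (m + 2)), h,
      Matrix.det_fromBlocks₁₁, ← hFdef, Matrix.det_fin_two]
  -- the two middle minors
  have h00 : (hankelMat g s (m + 1)).det = B.det * F 0 0 := by
    apply hminor _ (eqvS m) 0 0
    ext x y
    rcases x with i | u <;> rcases y with j | v
    · simp only [Matrix.submatrix_apply, Matrix.fromBlocks_apply₁₁, hankelMat, Matrix.of_apply,
        eqvS, Equiv.coe_fn_mk, Sum.elim_inl, hBdef]
      congr 1
      omega
    · simp only [Matrix.submatrix_apply, Matrix.fromBlocks_apply₁₂, hankelMat,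
        Matrix.of_apply, eqvS, Equiv.coe_fn_mk, Sum.elim_inl, Sum.elim_inr, hCdef]
      simp
      congr 1
      omega
    · simp only [Matrix.submatrix_apply, Matrix.fromBlocks_apply₂₁, hankelMat,
        Matrix.of_apply, eqvS, Equiv.coe_fn_mk, Sum.elim_inl, Sum.elim_inr, hDdef]
      simp
      congr 1
      omega
    · simp only [Matrix.submatrix_apply, Matrix.fromBlocks_apply₂₂, hankelMat,
        Matrix.of_apply, eqvS, Equiv.coe_fn_mk, Sum.elim_inr, hEdef]
      simp
  have h11 : (hankelMat g (s + 2) (m + 1)).det = B.det * F 1 1 := by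
    apply hminor _ (eqvL m) 1 1
    ext x y
    rcases x with i | u <;> rcases y with j | v
    · simp only [Matrix.submatrix_apply, Matrix.fromBlocks_apply₁₁, hankelMat, Matrix.of_apply,
        eqvL, Equiv.coe_fn_mk, Sum.elim_inl, hBdef]
    · simp only [Matrix.submatrix_apply, Matrix.fromBlocks_apply₁₂, hankelMat,
        Matrix.of_apply, eqvL, Equiv.coe_fn_mk, Sum.elim_inl, Sum.elim_inr, hCdef]
      simp
      congr 1
      omega
    · simp only [Matrix.submatrix_apply, Matrix.fromBlocks_apply₂₁, hankelMat,
        Matrix.of_apply, eqvL, Equiv.coe_fn_mk, Sum.elim_inl, Sum.elim_inr, hDdef]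
      simp
      congr 1
      omega
    · simp only [Matrix.submatrix_apply, Matrix.fromBlocks_apply₂₂, hankelMat,
        Matrix.of_apply, eqvL, Equiv.coe_fn_mk, Sum.elim_inr, hEdef]
      simp
      congr 1
      omega
  refine ⟨B.det * F 1 0, ?_⟩
  rw [h00, h11, hbig, hFsym]
  ring

theorem hankel_minor_positivity_propagation (g : ℕ → ℝ) (k : ℕ)
    (hinit : ∀ j, 1 ≤ j → j ≤ k - 1 → ∀ t, 1 ≤ t → t ≤ 2 ^ (k - j) →
      0 < (hankelMat g t j).det)
    (hfull : ∀ t, 1 ≤ t → 0 < (hankelMat g t k).det) :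
    ∀ j, 1 ≤ j → j ≤ k - 1 → ∀ t, 1 ≤ t → 0 < (hankelMat g t j).det := by
  suffices H : ∀ t, 1 ≤ t → ∀ j, 1 ≤ j → j ≤ k → 0 < (hankelMat g t j).det by
    intro j hj hjk t ht
    exact H t ht j hj (le_trans hjk (Nat.sub_le k 1))
  intro t
  induction t using Nat.strong_induction_on with
  | _ t iht =>
  intro ht j
  induction j using Nat.strong_induction_on with
  | _ j ihj =>
  intro hj hjk
  rcases eq_or_lt_of_le hjk with rfl | hjk'
  · exact hfull t ht
  · have hjk1 : j ≤ k - 1 := by omega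
    by_cases hT : t ≤ 2 ^ (k - j)
    · exact hinit j hj hjk1 t ht hT
    · have hpow : 2 ≤ 2 ^ (k - j) := by
        calc 2 = 2 ^ 1 := rfl
        _ ≤ 2 ^ (k - j) := Nat.pow_le_pow_right (by norm_num) (by omega)
      have ht3 : 3 ≤ t := by omega
      obtain ⟨s, rfl⟩ : ∃ s, t = s + 2 := ⟨t - 2, by omega⟩
      obtain ⟨m, rfl⟩ : ∃ m, j = m + 1 := ⟨j - 1, by omega⟩
      have hs1 : 1 ≤ s := by omega
      have hBpos : 0 < (hankelMat g (s + 2) m).det := by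
        rcases Nat.eq_zero_or_pos m with rfl | hm
        · rw [Matrix.det_fin_zero]; norm_num
        · exact ihj m (by omega) hm (by omega)
      have hprev : 0 < (hankelMat g s (m + 1)).det :=
        iht s (by omega) hs1 (m + 1) hj hjk
      have hbig : 0 < (hankelMat g s (m + 2)).det :=
        iht s (by omega) hs1 (m + 2) (by omega) (by omega)
      obtain ⟨x, hx⟩ := hankel_key g s m (ne_of_gt hBpos)
      nlinarith [sq_nonneg x]
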